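/- Let K be the homogenization cone of the ball C = {x ∈ X : ‖x‖ ≤ γ} with γ > 0. Then for (y,s) ∈ X × ℝ: P_K(y,s) = (y,s) if ‖y‖ ≤ γs; P_K(y,s) = (0,0) if γ‖y‖ ≤ −s; and otherwise P_K(y,s) = ((s + γ‖y‖)/(1 + γ²))·(γy/‖y‖, 1). -/

import Mathlib

open scoped Pointwise

open scoped RealInnerProductSpace

set_option maxHeartbeats 1000000 in
theorem projection_onto_ice_cream_cone
    {X : Type*} [NormedAddCommGroup X] [InnerProductSpace ℝ X] [CompleteSpace X]
    (γ : ℝ) (hγ : 0 < γ) (y : X) (s : ℝ) (p : X × ℝ)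
    (hpK : p ∈ closure (⋃ ρ ∈ Set.Ioi (0 : ℝ),
      ρ • (({x : X | ‖x‖ ≤ γ}) ×ˢ ({1} : Set ℝ))))
    (hmin : ∀ k ∈ closure (⋃ ρ ∈ Set.Ioi (0 : ℝ),
        ρ • (({x : X | ‖x‖ ≤ γ}) ×ˢ ({1} : Set ℝ))),
      ‖y - p.1‖ ^ 2 + (s - p.2) ^ 2 ≤ ‖y - k.1‖ ^ 2 + (s - k.2) ^ 2) :
    (‖y‖ ≤ γ * s → p = (y, s)) ∧
      (γ * ‖y‖ ≤ -s → p = (0, 0)) ∧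
      (¬ ‖y‖ ≤ γ * s → ¬ γ * ‖y‖ ≤ -s →
        p = ((s + γ * ‖y‖) / (1 + γ ^ 2)) • ((γ / ‖y‖) • y, (1 : ℝ))) := by
  set S : Set (X × ℝ) := {z : X × ℝ | ‖z.1‖ ≤ γ * z.2} with hSdef
  have hSclosed : IsClosed S := by
    have : S = (fun z : X × ℝ => ‖z.1‖ - γ * z.2) ⁻¹' Set.Iic 0 := by
      ext z; simp [hSdef, sub_nonpos]
    rw [this]
    exact IsClosed.preimage (by fun_prop) isClosed_Iic
  have hclosure : closure (⋃ ρ ∈ Set.Ioi (0 : ℝ),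
      ρ • (({x : X | ‖x‖ ≤ γ}) ×ˢ ({1} : Set ℝ))) = S := by
    apply subset_antisymm
    · apply closure_minimal _ hSclosed
      rintro z hz
      simp only [Set.mem_iUnion] at hz
      obtain ⟨ρ, hρ, hz⟩ := hz
      rw [Set.mem_smul_set] at hz
      obtain ⟨a, ha, rfl⟩ := hz
      obtain ⟨ha1, ha2⟩ := Set.mem_prod.1 ha
      simp only [Set.mem_singleton_iff] at ha2
      simp only [Set.mem_setOf_eq] at ha1
      have hρ' : (0:ℝ) < ρ := hρ
      simp only [hSdef, Set.mem_setOf_eq, Prod.smul_fst, Prod.smul_snd, smul_eq_mul, ha2,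
        mul_one]
      rw [norm_smul, Real.norm_eq_abs, abs_of_pos hρ']
      calc ρ * ‖a.1‖ ≤ ρ * γ := by nlinarith
        _ = γ * ρ := by ring
    · rintro ⟨x, t⟩ hz
      simp only [hSdef, Set.mem_setOf_eq] at hz
      have ht : 0 ≤ t := by nlinarith [norm_nonneg x]
      rcases ht.lt_or_eq with htpos | ht0
      · apply subset_closure
        simp only [Set.mem_iUnion]
        refine ⟨t, htpos, ?_⟩
        rw [Set.mem_smul_set]
        refine ⟨(t⁻¹ • x, 1), Set.mk_mem_prod ?_ rfl, ?_⟩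
        · simp only [Set.mem_setOf_eq]
          rw [norm_smul, Real.norm_eq_abs, abs_of_pos (inv_pos.mpr htpos)]
          rw [inv_mul_le_iff₀ htpos]
          linarith [hz]
        · simp [smul_smul, mul_inv_cancel₀ (ne_of_gt htpos)]
      · have hx : x = 0 := by
          rw [← ht0] at hz
          simp only [mul_zero] at hz
          exact norm_eq_zero.mp (le_antisymm hz (norm_nonneg x))
        subst hx
        rw [← ht0]
        have htend : Filter.Tendsto (fun n : ℕ => (((0:X), (1:ℝ)/(n+1)) : X × ℝ))
            Filter.atTop (nhds ((0:X), (0:ℝ))) := by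
          exact Filter.Tendsto.prodMk_nhds tendsto_const_nhds
            tendsto_one_div_add_atTop_nhds_zero_nat
        refine mem_closure_of_tendsto htend ?_
        filter_upwards with n
        simp only [Set.mem_iUnion]
        refine ⟨1/(n+1), Set.mem_Ioi.mpr (by positivity), ?_⟩
        rw [Set.mem_smul_set]
        refine ⟨((0:X), (1:ℝ)), Set.mk_mem_prod (by simp [le_of_lt hγ]) rfl, ?_⟩
        simp
  rw [hclosure] at hpK hmin
  -- uniqueness of the minimizer
  have key : ∀ q : X × ℝ, q ∈ S →
      (∀ k ∈ S, ‖y - q.1‖ ^ 2 + (s - q.2) ^ 2 ≤ ‖y - k.1‖ ^ 2 + (s - k.2) ^ 2) →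
      p = q := by
    intro q hqS hqmin
    have h1 : ‖y - p.1‖ ^ 2 + (s - p.2) ^ 2 ≤ ‖y - q.1‖ ^ 2 + (s - q.2) ^ 2 := hmin q hqS
    have h2 : ‖y - q.1‖ ^ 2 + (s - q.2) ^ 2 ≤ ‖y - p.1‖ ^ 2 + (s - p.2) ^ 2 := hqmin p hpK
    set m : X × ℝ := ((1/2 : ℝ) • (p.1 + q.1), (p.2 + q.2)/2) with hm
    have hmS : m ∈ S := by
      simp only [hSdef, Set.mem_setOf_eq, hm]
      have hpn : ‖p.1‖ ≤ γ * p.2 := hpK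
      have hqn : ‖q.1‖ ≤ γ * q.2 := hqS
      rw [norm_smul, Real.norm_eq_abs]
      have : ‖p.1 + q.1‖ ≤ ‖p.1‖ + ‖q.1‖ := norm_add_le _ _
      rw [abs_of_pos (by norm_num : (0:ℝ) < 1/2)]
      nlinarith
    have hmmin := hmin m hmS
    have hab : y - m.1 = (1/2 : ℝ) • ((y - p.1) + (y - q.1)) := by
      simp only [hm]
      module
    have h4 : ‖y - m.1‖ ^ 2 = (1/4) * ‖(y - p.1) + (y - q.1)‖ ^ 2 := by
      rw [hab, norm_smul, Real.norm_eq_abs, abs_of_pos (by norm_num : (0:ℝ) < 1/2),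
        mul_pow]
      ring
    have hpar := parallelogram_law_with_norm ℝ (y - p.1) (y - q.1)
    have hsub : (y - p.1) - (y - q.1) = q.1 - p.1 := by abel
    rw [hsub] at hpar
    have hm2 : s - m.2 = ((s - p.2) + (s - q.2))/2 := by
      simp only [hm]; ring
    rw [h4, hm2] at hmmin
    have hq1 : ‖q.1 - p.1‖ ^ 2 = 0 := by
      refine le_antisymm ?_ (sq_nonneg _)
      nlinarith [sq_nonneg ((s - p.2) - (s - q.2))]
    have hq2 : q.2 = p.2 := by nlinarith [hq1]
    have hq1' : q.1 = p.1 := by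
      have := norm_eq_zero.mp ((pow_eq_zero_iff two_ne_zero).mp hq1)
      exact (sub_eq_zero.mp this)
    exact Prod.ext hq1'.symm hq2.symm
  refine ⟨?_, ?_, ?_⟩
  · -- case 1
    intro hle
    have hys : ((y, s) : X × ℝ) ∈ S := by simpa [hSdef] using hle
    have h := hmin (y, s) hys
    simp only [sub_self, norm_zero] at h
    norm_num at h
    have hp1 : ‖y - p.1‖ ^ 2 = 0 := by nlinarith [sq_nonneg (s - p.2), sq_nonneg ‖y - p.1‖]
    have hp2 : (s - p.2) ^ 2 = 0 := by nlinarith [sq_nonneg ‖y - p.1‖]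
    have e1 : p.1 = y := by
      have := norm_eq_zero.mp ((pow_eq_zero_iff two_ne_zero).mp hp1)
      exact (sub_eq_zero.mp this).symm
    have e2 : p.2 = s := by
      have := (pow_eq_zero_iff (two_ne_zero)).mp hp2
      linarith [sub_eq_zero.mp this]
    exact Prod.ext e1 e2
  · -- case 2
    intro hle
    apply key (0, 0) (by simp [hSdef])
    intro k hk
    have hk' : ‖k.1‖ ≤ γ * k.2 := hk
    have hk2 : 0 ≤ k.2 := by nlinarith [norm_nonneg k.1]
    simp only [sub_zero]
    have hexp := norm_sub_sq_real y k.1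
    have hA : ⟪y, k.1⟫ ≤ ‖y‖ * ‖k.1‖ := real_inner_le_norm y k.1
    have hB : ‖y‖ * ‖k.1‖ ≤ ‖y‖ * (γ * k.2) :=
      mul_le_mul_of_nonneg_left hk' (norm_nonneg y)
    have hC : (γ * ‖y‖ + s) * k.2 ≤ 0 :=
      mul_nonpos_of_nonpos_of_nonneg (by linarith) hk2
    nlinarith [sq_nonneg ‖k.1‖, sq_nonneg k.2]
  · -- case 3
    intro hn1 hn2
    have hys : γ * s < ‖y‖ := not_le.mp hn1
    have hsy : -s < γ * ‖y‖ := not_le.mp hn2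
    have hny : 0 < ‖y‖ := by
      rcases (norm_nonneg y).lt_or_eq with h | h
      · exact h
      · exfalso
        rw [← h] at hys hsy
        simp only [mul_zero] at hsy
        have hs : 0 < s := by linarith
        nlinarith
    have hden : (0:ℝ) < 1 + γ ^ 2 := by positivity
    have hαpos : 0 < (s + γ * ‖y‖) / (1 + γ ^ 2) := div_pos (by linarith) hden
    set α : ℝ := (s + γ * ‖y‖) / (1 + γ ^ 2) with hα
    set c : ℝ := (‖y‖ - γ * s) / ((1 + γ ^ 2) * ‖y‖) with hc
    have hcpos : 0 < c := by
      rw [hc]; exact div_pos (by linarith) (by positivity)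
    have hq1eq : (((s + γ * ‖y‖) / (1 + γ ^ 2)) • (((γ / ‖y‖) • y, (1 : ℝ)) : X × ℝ)).1
        = (α * (γ / ‖y‖)) • y := by
      simp only [Prod.smul_fst, smul_smul, hα]
    have hq2eq : (((s + γ * ‖y‖) / (1 + γ ^ 2)) • (((γ / ‖y‖) • y, (1 : ℝ)) : X × ℝ)).2
        = α := by
      simp only [Prod.smul_snd, smul_eq_mul, mul_one, hα]
    apply key
    · -- membership
      simp only [hSdef, Set.mem_setOf_eq, hq1eq, hq2eq, Prod.smul_fst, Prod.smul_snd, smul_smul,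
        smul_eq_mul, mul_one]
      rw [norm_smul, Real.norm_eq_abs, abs_of_pos (mul_pos hαpos (div_pos hγ hny))]
      apply le_of_eq
      field_simp
    · intro k hk
      have hk' : ‖k.1‖ ≤ γ * k.2 := hk
      have hk2 : 0 ≤ k.2 := by nlinarith [norm_nonneg k.1]
      rw [hq1eq, hq2eq]
      set q1 : X := (α * (γ / ‖y‖)) • y with hq1
      have e1 : y - q1 = c • y := by
        rw [hq1]
        have : y - (α * (γ / ‖y‖)) • y = (1 - α * (γ / ‖y‖)) • y := by
          rw [sub_smul, one_smul]
        rw [this]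
        congr 1
        rw [hα, hc]
        field_simp
        ring
      have e2 : s - α = -(γ * (c * ‖y‖)) := by
        rw [hα, hc]
        field_simp
        ring
      have F1 : ‖y - k.1‖ ^ 2
          = ‖y - q1‖ ^ 2 + 2 * ⟪y - q1, q1 - k.1⟫ + ‖q1 - k.1‖ ^ 2 := by
        have h := norm_add_sq_real (y - q1) (q1 - k.1)
        rw [sub_add_sub_cancel] at h
        exact h
      have F2 : ⟪y - q1, q1 - k.1⟫ = c * ‖y‖ * (α * γ) - c * ⟪y, k.1⟫ := by
        rw [e1, inner_sub_right, real_inner_smul_left, real_inner_smul_left,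
          hq1, real_inner_smul_right, real_inner_self_eq_norm_sq]
        field_simp
      have F3 : c * ⟪y, k.1⟫ ≤ c * (‖y‖ * ‖k.1‖) :=
        mul_le_mul_of_nonneg_left (real_inner_le_norm y k.1) hcpos.le
      have F4 : c * ‖y‖ * ‖k.1‖ ≤ c * ‖y‖ * (γ * k.2) :=
        mul_le_mul_of_nonneg_left hk' (by positivity)
      have main : 0 ≤ ⟪y - q1, q1 - k.1⟫ + (s - α) * (α - k.2) := by
        rw [F2, e2]
        nlinarith [F3, F4]
      have expand : ‖y - k.1‖ ^ 2 + (s - k.2) ^ 2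
          = (‖y - q1‖ ^ 2 + (s - α) ^ 2)
            + 2 * (⟪y - q1, q1 - k.1⟫ + (s - α) * (α - k.2))
            + (‖q1 - k.1‖ ^ 2 + (α - k.2) ^ 2) := by
        rw [F1]; ring
      nlinarith [sq_nonneg ‖q1 - k.1‖, sq_nonneg (α - k.2), main, expand]
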